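/- (Strong convergence along convergent sequences.) If (x_n)_{n≥1} is a sequence in ℝ^d with x_n → x as n → ∞, then f_n(x_n) → f(x) as n → ∞ (for n ≥ K so that f_n is defined). -/

import Mathlib

/-- The point of `ℝ^d` with rational coordinates `q`. -/
noncomputable def ratPt {d : ℕ} (q : Fin d → ℚ) : EuclideanSpace ℝ (Fin d) :=
  WithLp.toLp 2 (fun i => (q i : ℝ))

/-- The Lipschitz approximation `f_n(x) = inf_{y ∈ ℚ^d} (f(y) + n‖x - y‖)`. -/
noncomputable def lipApprox {d : ℕ} (f : EuclideanSpace ℝ (Fin d) → ℝ) (n : ℝ)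
    (x : EuclideanSpace ℝ (Fin d)) : ℝ :=
  ⨅ q : Fin d → ℚ, (f (ratPt q) + n * ‖x - ratPt q‖)

lemma ratPt_term_lb {d : ℕ} (f : EuclideanSpace ℝ (Fin d) → ℝ) {K n : ℝ}
    (hK : 0 ≤ K) (hgrowth : ∀ x, |f x| ≤ K * (1 + ‖x‖)) (hKn : K ≤ n)
    (x : EuclideanSpace ℝ (Fin d)) (q : Fin d → ℚ) :
    -(K * (1 + ‖x‖)) ≤ f (ratPt q) + n * ‖x - ratPt q‖ := by
  have h1 : -(K * (1 + ‖ratPt q‖)) ≤ f (ratPt q) := neg_le_of_abs_le (hgrowth _)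
  have h2 : ‖ratPt q‖ ≤ ‖x‖ + ‖x - ratPt q‖ := by
    have := norm_sub_le x (x - ratPt q)
    simpa using this
  nlinarith [norm_nonneg (x - ratPt q)]

lemma exists_ratPt_near {d : ℕ} (x : EuclideanSpace ℝ (Fin d)) {r : ℝ} (hr : 0 < r) :
    ∃ q : Fin d → ℚ, ‖x - ratPt q‖ < r := by
  have hr' : 0 < r / (d + 1) := by positivity
  choose q hq using fun i => exists_rat_near (x i) hr'
  refine ⟨q, ?_⟩
  rw [EuclideanSpace.norm_eq]
  have hsum : ∑ i, ‖(x - ratPt q) i‖ ^ 2 ≤ (d : ℝ) * (r / (d + 1)) ^ 2 := by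
    calc ∑ i, ‖(x - ratPt q) i‖ ^ 2
        ≤ ∑ _i : Fin d, (r / (d + 1)) ^ 2 := by
          refine Finset.sum_le_sum fun i _ => ?_
          have hxi : (x - ratPt q) i = x i - (q i : ℝ) := by simp [ratPt]
          rw [hxi, Real.norm_eq_abs]
          exact pow_le_pow_left₀ (abs_nonneg _) (hq i).le 2
      _ = (d : ℝ) * (r / (d + 1)) ^ 2 := by
          simp [Finset.sum_const, mul_comm]
  have hlt : (d : ℝ) * (r / (d + 1)) ^ 2 < r ^ 2 := by
    have hd1 : (0 : ℝ) < (d : ℝ) + 1 := by positivity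
    rw [div_pow, mul_div_assoc']
    rw [div_lt_iff₀ (by positivity)]
    have h0 : (0:ℝ) < r ^ 2 := by positivity
    nlinarith [Nat.cast_nonneg (α := ℝ) d, sq_nonneg ((d:ℝ)), mul_nonneg (mul_nonneg (Nat.cast_nonneg (α := ℝ) d) (Nat.cast_nonneg (α := ℝ) d)) h0.le]
  calc Real.sqrt (∑ i, ‖(x - ratPt q) i‖ ^ 2)
      ≤ Real.sqrt ((d : ℝ) * (r / (d + 1)) ^ 2) := Real.sqrt_le_sqrt hsum
    _ < Real.sqrt (r ^ 2) := Real.sqrt_lt_sqrt (by positivity) hlt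
    _ = r := Real.sqrt_sq hr.le

/-- strong convergence along convergent sequences: if `x_n → x`,
then `f_n(x_n) → f(x)` as `n → ∞`. -/
theorem lipApprox_strong_convergence
    (d : ℕ) (hd : 1 ≤ d) (f : EuclideanSpace ℝ (Fin d) → ℝ) (hf : Continuous f)
    (K : ℝ) (hK : 0 ≤ K) (hgrowth : ∀ x, |f x| ≤ K * (1 + ‖x‖))
    (x : ℕ → EuclideanSpace ℝ (Fin d)) (x₀ : EuclideanSpace ℝ (Fin d))
    (hx : Filter.Tendsto x Filter.atTop (nhds x₀)) :
    Filter.Tendsto (fun n : ℕ => lipApprox f (n : ℝ) (x n)) Filter.atTop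
      (nhds (f x₀)) := by
  rw [Metric.tendsto_atTop]
  intro ε hε
  obtain ⟨δ₀, hδ₀, hδ⟩ := Metric.continuousAt_iff.mp (hf.continuousAt (x := x₀))
    (ε / 2) (half_pos hε)
  set δ := min δ₀ 1 with hδdef
  have hδpos : 0 < δ := lt_min hδ₀ one_pos
  have hδle : δ ≤ δ₀ := min_le_left _ _
  have hδ1 : δ ≤ 1 := min_le_right _ _
  obtain ⟨N₁, hN₁⟩ := Metric.tendsto_atTop.mp hx (δ / 2) (half_pos hδpos)
  have hcoe : Filter.Tendsto (fun n : ℕ => (n : ℝ)) Filter.atTop Filter.atTop :=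
    tendsto_natCast_atTop_atTop
  obtain ⟨N₂, hN₂⟩ := Filter.eventually_atTop.mp (hcoe.eventually_ge_atTop K)
  have hlin : Filter.Tendsto (fun n : ℕ => ((n : ℝ) - K) * (δ / 2))
      Filter.atTop Filter.atTop :=
    ((Filter.tendsto_atTop_add_const_right Filter.atTop (-K) hcoe).atTop_mul_const
      (half_pos hδpos)).congr (fun n => by rw [sub_eq_add_neg])
  obtain ⟨N₃, hN₃⟩ := Filter.eventually_atTop.mp
    (hlin.eventually_ge_atTop (|f x₀| + ε + K * (2 + ‖x₀‖)))
  refine ⟨max N₁ (max N₂ N₃), fun n hn => ?_⟩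
  have h1 : dist (x n) x₀ < δ / 2 := hN₁ n (le_trans (le_max_left _ _) hn)
  have h2 : K ≤ (n : ℝ) := hN₂ n (le_trans (le_trans (le_max_left _ _) (le_max_right _ _)) hn)
  have h3 : |f x₀| + ε + K * (2 + ‖x₀‖) ≤ ((n : ℝ) - K) * (δ / 2) :=
    hN₃ n (le_trans (le_trans (le_max_right _ _) (le_max_right _ _)) hn)
  have h1' : ‖x n - x₀‖ < δ / 2 := by rwa [← dist_eq_norm]
  have hnn : (0 : ℝ) ≤ (n : ℝ) := Nat.cast_nonneg n
  have hbdd : BddBelow (Set.range fun q : Fin d → ℚ =>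
      f (ratPt q) + (n : ℝ) * ‖x n - ratPt q‖) := by
    refine ⟨-(K * (1 + ‖x n‖)), ?_⟩
    rintro _ ⟨q, rfl⟩
    exact ratPt_term_lb f hK hgrowth h2 (x n) q
  rw [Real.dist_eq, abs_sub_lt_iff]
  constructor
  · -- upper bound
    have hn1 : (0 : ℝ) < (n : ℝ) + 1 := by positivity
    have hrpos : 0 < min (δ / 2) (ε / (2 * ((n : ℝ) + 1))) :=
      lt_min (half_pos hδpos) (by positivity)
    obtain ⟨q, hq⟩ := exists_ratPt_near (x n) hrpos
    have h5 : lipApprox f (n : ℝ) (x n) ≤ f (ratPt q) + (n : ℝ) * ‖x n - ratPt q‖ :=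
      ciInf_le hbdd q
    have hq1 : ‖x n - ratPt q‖ < δ / 2 := lt_of_lt_of_le hq (min_le_left _ _)
    have hq2 : ‖x n - ratPt q‖ < ε / (2 * ((n : ℝ) + 1)) :=
      lt_of_lt_of_le hq (min_le_right _ _)
    have hqx₀ : dist (ratPt q) x₀ < δ₀ := by
      have : dist (ratPt q) x₀ ≤ dist (ratPt q) (x n) + dist (x n) x₀ := dist_triangle _ _ _
      have hd1 : dist (ratPt q) (x n) < δ / 2 := by
        rw [dist_comm, dist_eq_norm]; exact hq1
      linarith
    have hfq : |f (ratPt q) - f x₀| < ε / 2 := by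
      have := hδ hqx₀
      rwa [Real.dist_eq] at this
    have hfq' : f (ratPt q) < f x₀ + ε / 2 := by
      have := (abs_sub_lt_iff.mp hfq).1; linarith
    have hmul : (n : ℝ) * ‖x n - ratPt q‖ ≤ ε / 2 := by
      have h6 : (n : ℝ) * ‖x n - ratPt q‖ ≤ (n : ℝ) * (ε / (2 * ((n : ℝ) + 1))) :=
        mul_le_mul_of_nonneg_left hq2.le hnn
      have h7 : (n : ℝ) * (ε / (2 * ((n : ℝ) + 1))) ≤ ε / 2 := by
        rw [mul_div_assoc', div_le_div_iff₀ (by positivity) two_pos]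
        nlinarith
      linarith
    linarith
  · -- lower bound
    have hlow : f x₀ - ε / 2 ≤ lipApprox f (n : ℝ) (x n) := by
      refine le_ciInf fun q => ?_
      by_cases hc : ‖x n - ratPt q‖ < δ / 2
      · have hqx₀ : dist (ratPt q) x₀ < δ₀ := by
          have ht : dist (ratPt q) x₀ ≤ dist (ratPt q) (x n) + dist (x n) x₀ :=
            dist_triangle _ _ _
          have hd1 : dist (ratPt q) (x n) < δ / 2 := by
            rw [dist_comm, dist_eq_norm]; exact hc
          linarith
        have hfq : |f (ratPt q) - f x₀| < ε / 2 := by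
          have := hδ hqx₀; rwa [Real.dist_eq] at this
        have hfq' : f x₀ - ε / 2 < f (ratPt q) := by
          have := (abs_sub_lt_iff.mp hfq).2; linarith
        have hmul : (0 : ℝ) ≤ (n : ℝ) * ‖x n - ratPt q‖ :=
          mul_nonneg hnn (norm_nonneg _)
        linarith
      · push_neg at hc
        have hb1 : -(K * (1 + ‖ratPt q‖)) ≤ f (ratPt q) := neg_le_of_abs_le (hgrowth _)
        have hb2 : ‖ratPt q‖ ≤ ‖x n‖ + ‖x n - ratPt q‖ := by
          have := norm_sub_le (x n) (x n - ratPt q); simpa using this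
        have hxb : ‖x n‖ ≤ ‖x₀‖ + 1 := by
          have ht : ‖x n‖ ≤ ‖x₀‖ + ‖x n - x₀‖ := by
            have := norm_add_le x₀ (x n - x₀); simpa using this
          linarith
        have hmm : ((n : ℝ) - K) * (δ / 2) ≤ ((n : ℝ) - K) * ‖x n - ratPt q‖ :=
          mul_le_mul_of_nonneg_left hc (by linarith)
        have habs : f x₀ ≤ |f x₀| := le_abs_self _
        nlinarith [norm_nonneg (x n - ratPt q)]
    linarith
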